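/- Every best match graph (G,σ) has a least-resolved tree that is unique up to isomorphism fixing the leaves: there exists a leaf-colored tree (T*,σ) with 𝔅(T*,σ) = (G,σ) such that every leaf-colored tree (T,σ) with 𝔅(T,σ) = (G,σ) displays T*, and any two trees with this property are isomorphic by an isomorphism fixing the leaf set. -/

import Mathlib

/-- A planted phylogenetic rooted tree, encoded by a parent function on a
finite vertex set.  The root `0_T` is a fixed point of `parent`; every vertex
reaches the root by iterating `parent`; the root has exactly one child
(`planted`); and every inner vertex (non-root vertex having a child) has at
least two children (`phylo`). -/
structure PPTree where
  V : Type
  [fintypeV : Fintype V]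
  [decEqV : DecidableEq V]
  root : V
  parent : V → V
  parent_root : parent root = root
  reach : ∀ v : V, ∃ n : ℕ, parent^[n] v = root
  planted : ∃! v : V, v ≠ root ∧ parent v = root
  phylo : ∀ v : V, v ≠ root → (∃ u, parent u = v ∧ u ≠ v) →
      ∃ u w, parent u = v ∧ parent w = v ∧ u ≠ w ∧ u ≠ v ∧ w ≠ v

attribute [instance] PPTree.fintypeV PPTree.decEqV

namespace PPTree

variable (T : PPTree)

/-- `T.le x y` means `x ⪯_T y`, i.e. `y` is an ancestor of `x` (or `x = y`). -/
def le (x y : T.V) : Prop := ∃ n : ℕ, T.parent^[n] x = y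

/-- `T.lt x y` means `x ≺_T y`. -/
def lt (x y : T.V) : Prop := T.le x y ∧ x ≠ y

/-- Leaves are the `⪯_T`-minimal vertices, i.e. vertices without children. -/
def isLeaf (v : T.V) : Prop := ∀ u, T.parent u = v → u = v

/-- Inner vertices: neither leaves nor the planted root. -/
def inner (v : T.V) : Prop := v ≠ T.root ∧ ¬ T.isLeaf v

/-- The last common ancestor of two vertices: the `⪯_T`-minimal common
ancestor. -/
noncomputable def lca (x y : T.V) : T.V :=
  @Classical.epsilon _ ⟨T.root⟩
    fun v => T.le x v ∧ T.le y v ∧ ∀ w, T.le x w → T.le y w → T.le v w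

/-- The last common ancestor of a set of vertices. -/
noncomputable def lcaSet (A : Set T.V) : T.V :=
  @Classical.epsilon _ ⟨T.root⟩
    fun v => (∀ a ∈ A, T.le a v) ∧ ∀ w, (∀ a ∈ A, T.le a w) → T.le v w

/-- `ρ_T`, the unique child of the planted root. -/
noncomputable def rho : T.V := T.planted.choose

theorem rho_ne_root : T.rho ≠ T.root := T.planted.choose_spec.1.1

/-- Edges of `T`, identified with their child endpoint: the vertex `v ≠ 0_T`
represents the edge `(parent v, v)`. -/
abbrev Edge := {v : T.V // v ≠ T.root}

/-- The union `V(T) ∪ E(T)`. -/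
abbrev VE := T.V ⊕ T.Edge

/-- The ancestor order `⪯_T` extended to `V(T) ∪ E(T)`: for an edge `e = uv`
(`u` the parent of `v`), `x ⪯ e` iff `x ⪯ v`, `e ⪯ x` iff `u ⪯ x`, and
`e ⪯ f` iff the child endpoints are comparable accordingly. -/
def leVE : T.VE → T.VE → Prop
  | Sum.inl x, Sum.inl y => T.le x y
  | Sum.inl x, Sum.inr e => T.le x e.1
  | Sum.inr e, Sum.inl y => T.le (T.parent e.1) y
  | Sum.inr e, Sum.inr f => T.le e.1 f.1

def ltVE (a b : T.VE) : Prop := T.leVE a b ∧ a ≠ b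

/-- Two elements of `V(T) ∪ E(T)` are comparable. -/
def cmpVE (a b : T.VE) : Prop := T.leVE a b ∨ T.leVE b a

/-- Membership in `L(T)` for elements of `V(T) ∪ E(T)`. -/
def isLeafVE : T.VE → Prop
  | Sum.inl v => T.isLeaf v
  | Sum.inr _ => False

/-- Map an element of `V(T) ∪ E(T)` to a vertex (an edge `uv` is sent to its
child endpoint `v`). -/
def toVertex : T.VE → T.V
  | Sum.inl v => v
  | Sum.inr e => e.1

end PPTree

/-- Axioms (R0)–(R3) of a reconciliation map `μ : V(T) → V(S) ∪ E(S)`. -/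
structure IsRecon (T S : PPTree) (μ : T.V → S.VE) : Prop where
  R0 : ∀ x, μ x = Sum.inl S.root ↔ x = T.root
  R1 : ∀ x, S.isLeafVE (μ x) ↔ T.isLeaf x
  R2 : ∀ x y, T.lt y x → (∃ u, μ x = Sum.inl u) → (∃ v, μ y = Sum.inl v) → μ x ≠ μ y
  R3 : ∀ x y, T.lt y x → ¬ S.ltVE (μ x) (μ y)

/-- A reconciliation is HGT-free if the images of the endpoints of every edge
of `T` are `⪯_S`-comparable. -/
def IsHGTFree (T S : PPTree) (μ : T.V → S.VE) : Prop :=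
  ∀ v : T.V, v ≠ T.root → S.cmpVE (μ (T.parent v)) (μ v)

/-- `(T,S,μ,σ)` is a σ-reconciliation when `μ` restricted to `L(T)` equals
`σ`. -/
def SigmaCompat (T S : PPTree) (μ : T.V → S.VE) (σ : T.V → S.V) : Prop :=
  ∀ x, T.isLeaf x → μ x = Sum.inl (σ x)

/-- A time map for `T`. -/
def IsTimeMap (T : PPTree) (τ : T.V → ℝ) : Prop :=
  ∀ x y, T.lt x y → τ x < τ y

/-- Axioms (S0)–(S3) of a relaxed scenario `(T,S,μ,τ_T,τ_S)`. -/
structure IsRelaxedScenario (T S : PPTree) (μ : T.V → S.VE)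
    (τT : T.V → ℝ) (τS : S.V → ℝ) : Prop where
  timeT : IsTimeMap T τT
  timeS : IsTimeMap S τS
  S0 : ∀ x, μ x = Sum.inl S.root ↔ x = T.root
  S1 : ∀ x, S.isLeafVE (μ x) ↔ T.isLeaf x
  S2 : ∀ x v, μ x = Sum.inl v → τS v = τT x
  S3 : ∀ x (e : S.Edge), μ x = Sum.inr e → τS e.1 < τT x ∧ τT x < τS (S.parent e.1)

/-- A planted phylogenetic tree whose leaf set is (identified with) the finite
type `L` via the embedding `emb`. -/
structure LeafTree (L : Type) [Fintype L] [DecidableEq L] extends PPTree where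
  emb : L → toPPTree.V
  emb_inj : Function.Injective emb
  emb_leaf : ∀ v : L, toPPTree.isLeaf (emb v)
  emb_surj : ∀ l, toPPTree.isLeaf l → ∃ v : L, emb v = l

/-- The tree `T` displays the rooted triple `ab|c`:
`lca(a,b) ≺ lca(a,c) = lca(b,c)`. -/
def displaysTriple (T : PPTree) (a b c : T.V) : Prop :=
  T.lt (T.lca a b) (T.lca a c) ∧ T.lca a c = T.lca b c

section BMG

variable {V Y : Type} [Fintype V] [DecidableEq V]

/-- `y` is a best match of `x` in the leaf-colored tree `(T,σ)`:
`σ(x) ≠ σ(y)` and `lca(x,y) ⪯ lca(x,y')` for all leaves `y'` of the same color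
as `y`. -/
def LeafTree.bestMatch (T : LeafTree V) (σ : V → Y) (x y : V) : Prop :=
  σ x ≠ σ y ∧ ∀ y' : V, σ y' = σ y →
    T.toPPTree.le (T.toPPTree.lca (T.emb x) (T.emb y))
      (T.toPPTree.lca (T.emb x) (T.emb y'))

/-- `(G,σ)` is the best match graph `𝔅(T,σ)` of the leaf-colored tree
`(T,σ)`. -/
def Explains (T : LeafTree V) (σ : V → Y) (G : V → V → Prop) : Prop :=
  ∀ x y : V, G x y ↔ T.bestMatch σ x y

/-- The triple `ab|b'` is informative for `(G,σ)`. -/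
def Informative (G : V → V → Prop) (σ : V → Y) (a b b' : V) : Prop :=
  a ≠ b ∧ a ≠ b' ∧ b ≠ b' ∧ σ a ≠ σ b ∧ σ b = σ b' ∧ G a b ∧ ¬ G a b'

/-- The triple `ab|b'` is forbidden for `(G,σ)`. -/
def Forbidden (G : V → V → Prop) (σ : V → Y) (a b b' : V) : Prop :=
  a ≠ b ∧ a ≠ b' ∧ b ≠ b' ∧ σ a ≠ σ b ∧ σ b = σ b' ∧ G a b ∧ G a b'

end BMG

/-! ### Auxiliary theory -/

namespace PPTree

variable {T : PPTree}

theorem le_refl (x : T.V) : T.le x x := ⟨0, rfl⟩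

theorem le_trans {x y z : T.V} (h1 : T.le x y) (h2 : T.le y z) : T.le x z := by
  obtain ⟨n, rfl⟩ := h1; obtain ⟨m, rfl⟩ := h2
  exact ⟨m + n, (Function.iterate_add_apply _ m n x)⟩

theorem le_parent (x : T.V) : T.le x (T.parent x) := ⟨1, rfl⟩

theorem le_root (x : T.V) : T.le x T.root := T.reach x

theorem iterate_root (n : ℕ) : T.parent^[n] T.root = T.root := by
  induction n with
  | zero => rfl
  | succ k ih => rw [Function.iterate_succ_apply, T.parent_root, ih]

theorem root_le {x : T.V} (h : T.le T.root x) : x = T.root := by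
  obtain ⟨n, rfl⟩ := h; exact iterate_root n

theorem le_antisymm {x y : T.V} (h1 : T.le x y) (h2 : T.le y x) : x = y := by
  obtain ⟨n, hn⟩ := h1
  obtain ⟨m, hm⟩ := h2
  rcases Nat.eq_zero_or_pos (n + m) with h | h
  · have hn0 : n = 0 := by omega
    subst hn0; exact (by simpa using hn : x = y)
  · have hcyc : T.parent^[n + m] x = x := by
      rw [Nat.add_comm n m, Function.iterate_add_apply, hn, hm]
    have hmul : ∀ k : ℕ, T.parent^[k * (n + m)] x = x := by
      intro k; induction k with
      | zero => simp
      | succ j ih => rw [Nat.succ_mul, Function.iterate_add_apply, hcyc, ih]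
    obtain ⟨k, hk⟩ := T.reach x
    have hbig : T.parent^[(k + 1) * (n + m)] x = x := hmul (k + 1)
    have hge : (k + 1) * (n + m) ≥ k := by nlinarith
    have hroot : T.parent^[(k + 1) * (n + m)] x = T.root := by
      have he : (k + 1) * (n + m) = ((k + 1) * (n + m) - k) + k := by omega
      rw [he, Function.iterate_add_apply, hk, iterate_root]
    have hx : x = T.root := by rw [← hbig, hroot]
    subst hx
    have hy : y = T.root := by rw [← hn, iterate_root]
    exact hy.symm

theorem le_total_of_le {x y z : T.V} (h1 : T.le x y) (h2 : T.le x z) :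
    T.le y z ∨ T.le z y := by
  obtain ⟨n, rfl⟩ := h1
  obtain ⟨m, rfl⟩ := h2
  rcases Nat.le_total n m with h | h
  · left; exact ⟨m - n, by rw [← Function.iterate_add_apply]; congr 1; omega⟩
  · right; exact ⟨n - m, by rw [← Function.iterate_add_apply]; congr 1; omega⟩

theorem parent_le_of_lt {x y : T.V} (h : T.le x y) (hne : x ≠ y) :
    T.le (T.parent x) y := by
  obtain ⟨n, rfl⟩ := h
  cases n with
  | zero => exact absurd rfl hne
  | succ k =>
    exact ⟨k, by rw [← Function.iterate_succ_apply]⟩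

theorem leaf_le {l x : T.V} (hl : T.isLeaf l) (h : T.le x l) : x = l := by
  obtain ⟨n, hn⟩ := h
  induction n generalizing x with
  | zero => simpa using hn
  | succ k ih =>
    rw [Function.iterate_succ_apply] at hn
    have hx : T.parent x = l := ih hn
    exact hl x hx

theorem parent_ne_self {x : T.V} (hx : x ≠ T.root) : T.parent x ≠ x := by
  intro h
  obtain ⟨n, hn⟩ := T.reach x
  have hall : ∀ m : ℕ, T.parent^[m] x = x := by
    intro m; induction m with
    | zero => rfl
    | succ k ih => rw [Function.iterate_succ_apply', ih, h]
  exact hx ((hall n).symm.trans hn)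

/-- Height of a vertex: distance to the root. -/
noncomputable def ht (T : PPTree) (v : T.V) : ℕ := Nat.find (T.reach v)

theorem ht_spec (v : T.V) : T.parent^[T.ht v] v = T.root := Nat.find_spec (T.reach v)

theorem ht_le {v : T.V} {n : ℕ} (h : T.parent^[n] v = T.root) : T.ht v ≤ n :=
  Nat.find_min' (T.reach v) h

theorem ht_root : T.ht T.root = 0 := by
  simp [ht, Nat.find_eq_zero]

theorem ht_iterate {u : T.V} {k : ℕ} (hk : k ≤ T.ht u) :
    T.ht (T.parent^[k] u) = T.ht u - k := by
  have h1 : T.parent^[T.ht u - k] (T.parent^[k] u) = T.root := by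
    rw [← Function.iterate_add_apply]
    have he : T.ht u - k + k = T.ht u := by omega
    rw [he]; exact ht_spec u
  have h2 := ht_le h1
  rcases Nat.eq_or_lt_of_le h2 with h3 | h3
  · exact h3
  · exfalso
    have h4 : T.parent^[T.ht (T.parent^[k] u) + k] u = T.root := by
      rw [Function.iterate_add_apply]; exact ht_spec _
    have h5 := ht_le h4
    omega

theorem ht_lt_of_lt {x y : T.V} (h : T.le x y) (hne : x ≠ y) : T.ht y < T.ht x := by
  obtain ⟨n, hn⟩ := h
  have hn1 : n ≠ 0 := by rintro rfl; exact hne (by simpa using hn : x = y)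
  rcases Nat.lt_or_ge (T.ht x) n with hlt | hge
  · have hyr : y = T.root := by
      rw [← hn]
      have he : n = (n - T.ht x) + T.ht x := by omega
      rw [he, Function.iterate_add_apply, ht_spec, iterate_root]
    subst hyr
    rw [ht_root]
    rcases Nat.eq_zero_or_pos (T.ht x) with h0 | h0
    · exfalso
      have hx0 : x = T.root := by have := ht_spec (T := T) x; rwa [h0] at this
      exact hne (by rw [hx0, ← hn, hx0, iterate_root])
    · exact h0
  · have hroot : T.parent^[T.ht x - n] y = T.root := by
      rw [← hn, ← Function.iterate_add_apply]
      have he : T.ht x - n + n = T.ht x := by omega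
      rw [he]; exact ht_spec x
    have hle := ht_le hroot
    omega

theorem le_rho {v : T.V} (hv : v ≠ T.root) : T.le v T.rho := by
  have H : ∀ n : ℕ, ∀ v : T.V, T.ht v = n → v ≠ T.root → T.le v T.rho := by
    intro n
    induction n using Nat.strong_induction_on with
    | _ n ih =>
      intro v hht hv
      by_cases hp : T.parent v = T.root
      · have hvr : v = T.rho := T.planted.choose_spec.2 v ⟨hv, hp⟩
        rw [hvr]; exact le_refl _
      · have hlt : T.ht (T.parent v) < n := by
          rw [← hht]
          exact ht_lt_of_lt (le_parent v) (Ne.symm (parent_ne_self hv))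
        have := ih _ hlt (T.parent v) rfl hp
        exact le_trans (le_parent v) this
  exact H (T.ht v) v rfl hv

theorem parent_rho : T.parent T.rho = T.root := T.planted.choose_spec.1.2

theorem eq_rho {v : T.V} (hv : v ≠ T.root) (hp : T.parent v = T.root) : v = T.rho :=
  T.planted.choose_spec.2 v ⟨hv, hp⟩

theorem root_not_leaf : ¬ T.isLeaf T.root := by
  intro h
  exact T.rho_ne_root (h T.rho parent_rho)

theorem lt_of_le_of_lt' {x y z : T.V} (h1 : T.le x y) (h2 : T.lt y z) : T.lt x z := by
  refine ⟨le_trans h1 h2.1, ?_⟩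
  rintro rfl
  exact h2.2 (le_antisymm h2.1 h1)

theorem lt_of_lt_of_le' {x y z : T.V} (h1 : T.lt x y) (h2 : T.le y z) : T.lt x z := by
  refine ⟨le_trans h1.1 h2, ?_⟩
  rintro rfl
  exact h1.2 (le_antisymm h1.1 h2)

/-- Every vertex has a leaf below it. -/
theorem exists_leaf_le (v : T.V) : ∃ l, T.isLeaf l ∧ T.le l v := by
  have hbound : ∀ u : T.V, T.ht u < Fintype.card T.V := by
    intro u
    have hinj : Function.Injective (fun i : Fin (T.ht u + 1) => T.parent^[i.1] u) := by
      intro ⟨i, hi⟩ ⟨j, hj⟩ hij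
      simp only at hij
      have hi' : T.ht (T.parent^[i] u) = T.ht u - i := ht_iterate (by omega)
      have hj' : T.ht (T.parent^[j] u) = T.ht u - j := ht_iterate (by omega)
      rw [hij] at hi'
      have : i = j := by omega
      simp [this]
    have := Fintype.card_le_of_injective _ hinj
    simp only [Fintype.card_fin] at this
    omega
  have H : ∀ n : ℕ, ∀ v : T.V, Fintype.card T.V - T.ht v = n → ∃ l, T.isLeaf l ∧ T.le l v := by
    intro n
    induction n using Nat.strong_induction_on with
    | _ n ih =>
      intro v hn
      by_cases hl : T.isLeaf v
      · exact ⟨v, hl, le_refl v⟩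
      · simp only [isLeaf, not_forall] at hl
        obtain ⟨u, hu, hne⟩ := hl
        have hlt : T.ht v < T.ht u := ht_lt_of_lt (hu ▸ le_parent u) hne
        obtain ⟨l, hll, hle⟩ := ih (Fintype.card T.V - T.ht u)
          (by have := hbound u; omega) u rfl
        exact ⟨l, hll, le_trans hle (hu ▸ le_parent u)⟩
  exact H _ v rfl

end PPTree

namespace PPTree

variable {T : PPTree}

theorem exists_glb (x y : T.V) :
    ∃ v, T.le x v ∧ T.le y v ∧ ∀ w, T.le x w → T.le y w → T.le v w := by
  classical
  let s : Finset T.V := Finset.univ.filter (fun v => T.le x v ∧ T.le y v)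
  have hs : s.Nonempty := ⟨T.root, by simp [s, le_root]⟩
  obtain ⟨v, hv, hmax⟩ := s.exists_max_image T.ht hs
  simp only [s, Finset.mem_filter, Finset.mem_univ, true_and] at hv hmax
  refine ⟨v, hv.1, hv.2, fun w hw1 hw2 => ?_⟩
  rcases le_total_of_le hv.1 hw1 with h | h
  · exact h
  · by_cases hvw : w = v
    · subst hvw; exact le_refl w
    · exfalso
      have := ht_lt_of_lt h hvw
      have := hmax w ⟨hw1, hw2⟩
      omega

theorem lca_spec (x y : T.V) :
    T.le x (T.lca x y) ∧ T.le y (T.lca x y) ∧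
      ∀ w, T.le x w → T.le y w → T.le (T.lca x y) w :=
  Classical.epsilon_spec (exists_glb x y)

theorem le_lca_left (x y : T.V) : T.le x (T.lca x y) := (lca_spec x y).1
theorem le_lca_right (x y : T.V) : T.le y (T.lca x y) := (lca_spec x y).2.1
theorem lca_le (x y : T.V) {w : T.V} (h1 : T.le x w) (h2 : T.le y w) :
    T.le (T.lca x y) w := (lca_spec x y).2.2 w h1 h2

theorem exists_glbSet {S : Set T.V} (hS : S.Nonempty) :
    ∃ v, (∀ a ∈ S, T.le a v) ∧ ∀ w, (∀ a ∈ S, T.le a w) → T.le v w := by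
  classical
  obtain ⟨a0, ha0⟩ := hS
  let s : Finset T.V := Finset.univ.filter (fun v => ∀ a ∈ S, T.le a v)
  have hs : s.Nonempty := ⟨T.root, by simp [s, le_root]⟩
  obtain ⟨v, hv, hmax⟩ := s.exists_max_image T.ht hs
  simp only [s, Finset.mem_filter, Finset.mem_univ, true_and] at hv hmax
  refine ⟨v, hv, fun w hw => ?_⟩
  rcases le_total_of_le (hv a0 ha0) (hw a0 ha0) with h | h
  · exact h
  · by_cases hvw : w = v
    · subst hvw; exact le_refl w
    · exfalso
      have := ht_lt_of_lt h hvw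
      have := hmax w hw
      omega

theorem lcaSet_spec {S : Set T.V} (hS : S.Nonempty) :
    (∀ a ∈ S, T.le a (T.lcaSet S)) ∧
      ∀ w, (∀ a ∈ S, T.le a w) → T.le (T.lcaSet S) w :=
  Classical.epsilon_spec (exists_glbSet hS)

theorem exists_child_le {u v : T.V} (h : T.le u v) (hne : u ≠ v) (hv : v ≠ T.root) :
    ∃ c, T.parent c = v ∧ c ≠ v ∧ T.le u c := by
  obtain ⟨n, hn⟩ := h
  cases n with
  | zero => exact absurd hn hne
  | succ k =>
    refine ⟨T.parent^[k] u, by rw [← Function.iterate_succ_apply' T.parent k u]; exact hn, ?_, ⟨k, rfl⟩⟩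
    intro hc
    rw [Function.iterate_succ_apply' T.parent k u, hc] at hn
    exact parent_ne_self hv hn

theorem children_incomparable {c c' v : T.V} (hv : v ≠ T.root)
    (hc : T.parent c = v) (hc' : T.parent c' = v) (hne : c ≠ c') :
    ¬ T.le c c' := by
  intro h
  have h2 : T.le v c' := hc ▸ parent_le_of_lt h hne
  have h3 : T.le c' v := hc' ▸ le_parent c'
  have h4 : v = c' := le_antisymm h3 h2 |>.symm
  subst h4
  exact parent_ne_self hv hc'

/-- If `c,c'` are distinct children of `v ≠ root`, nothing is below both. -/
theorem children_disjoint {c c' v x : T.V} (hv : v ≠ T.root)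
    (hc : T.parent c = v) (hc' : T.parent c' = v) (hne : c ≠ c')
    (h1 : T.le x c) (h2 : T.le x c') : False := by
  rcases le_total_of_le h1 h2 with h | h
  · exact children_incomparable hv hc hc' hne h
  · exact children_incomparable hv hc' hc (Ne.symm hne) h

theorem exists_other_child {c v : T.V} (hv : v ≠ T.root)
    (hc : T.parent c = v) (hcv : c ≠ v) :
    ∃ c', T.parent c' = v ∧ c' ≠ v ∧ c' ≠ c := by
  obtain ⟨u, w, hu, hw, huw, huv, hwv⟩ := T.phylo v hv ⟨c, hc, hcv⟩
  by_cases h : u = c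
  · exact ⟨w, hw, hwv, by rw [← h]; exact (Ne.symm huw)⟩
  · exact ⟨u, hu, huv, h⟩

end PPTree


section LeastResolved

variable {V : Type} [Fintype V] [DecidableEq V]

/-- The cluster of a vertex `v`: the set of leaves below `v`. -/
def LeafTree.cluster (T : LeafTree V) (v : T.toPPTree.V) : Set V :=
  {x : V | T.toPPTree.le (T.emb x) v}

/-- The set of clusters of a tree. -/
def LeafTree.clusters (T : LeafTree V) : Set (Set V) :=
  Set.range T.cluster

/-- `T` displays (is a refinement of) the tree `T'` on the same leaf set,
i.e. `T'` can be obtained from `T` by contracting edges; equivalently, every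
cluster of `T'` is a cluster of `T`. -/
def LeafTree.Displays (T T' : LeafTree V) : Prop :=
  T'.clusters ⊆ T.clusters

/-- An isomorphism between two trees on the leaf set `V` fixing the leaves. -/
def LeafIso (T₁ T₂ : LeafTree V) : Prop :=
  ∃ f : T₁.toPPTree.V ≃ T₂.toPPTree.V,
    (∀ x : V, f (T₁.emb x) = T₂.emb x) ∧
    f T₁.root = T₂.root ∧
    ∀ v, f (T₁.toPPTree.parent v) = T₂.toPPTree.parent (f v)

namespace LeafTree

variable {V : Type} [Fintype V] [DecidableEq V] {A : LeafTree V}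

open PPTree

theorem emb_ne_root (x : V) : A.emb x ≠ A.root := by
  intro h
  exact root_not_leaf (h ▸ A.emb_leaf x)

theorem mem_cluster {x : V} {v : A.toPPTree.V} :
    x ∈ A.cluster v ↔ A.toPPTree.le (A.emb x) v := Iff.rfl

theorem cluster_mono {u v : A.toPPTree.V} (h : A.toPPTree.le u v) :
    A.cluster u ⊆ A.cluster v := fun _ hx => le_trans hx h

theorem cluster_root : A.cluster A.root = Set.univ :=
  Set.eq_univ_of_forall fun x => le_root _

theorem cluster_rho : A.cluster A.toPPTree.rho = Set.univ :=
  Set.eq_univ_of_forall fun x => le_rho (emb_ne_root x)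

theorem cluster_emb (x : V) : A.cluster (A.emb x) = {x} := by
  ext y
  simp only [mem_cluster, Set.mem_singleton_iff]
  constructor
  · intro h
    exact A.emb_inj (leaf_le (A.emb_leaf x) h)
  · rintro rfl; exact le_refl _

theorem cluster_nonempty (v : A.toPPTree.V) : (A.cluster v).Nonempty := by
  obtain ⟨l, hl, hle⟩ := exists_leaf_le v
  obtain ⟨x, rfl⟩ := A.emb_surj l hl
  exact ⟨x, hle⟩

theorem comparable_of_cluster_inter {u v : A.toPPTree.V}
    (h : (A.cluster u ∩ A.cluster v).Nonempty) :
    A.toPPTree.le u v ∨ A.toPPTree.le v u := by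
  obtain ⟨x, hx1, hx2⟩ := h
  exact le_total_of_le hx1 hx2

theorem cluster_ssubset {u v : A.toPPTree.V} (h : A.toPPTree.le u v) (hne : u ≠ v)
    (hv : v ≠ A.root) : A.cluster u ⊂ A.cluster v := by
  refine ⟨cluster_mono h, ?_⟩
  intro hsub
  obtain ⟨c, hc, hcv, hlec⟩ := exists_child_le h hne hv
  obtain ⟨c', hc', hc'v, hc'c⟩ := exists_other_child hv hc hcv
  obtain ⟨x, hx⟩ := cluster_nonempty (A := A) c'
  have hxv : x ∈ A.cluster v := cluster_mono (hc' ▸ le_parent c') hx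
  have hxu : x ∈ A.cluster u := hsub hxv
  exact children_disjoint hv hc' hc hc'c hx (le_trans hxu hlec)

theorem cluster_inj {u v : A.toPPTree.V} (hu : u ≠ A.root) (hv : v ≠ A.root)
    (h : A.cluster u = A.cluster v) : u = v := by
  by_contra hne
  have hcomp : A.toPPTree.le u v ∨ A.toPPTree.le v u := by
    apply comparable_of_cluster_inter
    obtain ⟨x, hx⟩ := cluster_nonempty (A := A) u
    exact ⟨x, hx, h ▸ hx⟩
  rcases hcomp with hle | hle
  · exact (cluster_ssubset hle hne hv).2 (h ▸ subset_refl _)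
  · exact (cluster_ssubset hle (Ne.symm hne) hu).2 (h ▸ subset_refl _)

theorem univ_mem_clusters : Set.univ ∈ A.clusters := ⟨A.root, cluster_root⟩

theorem singleton_mem_clusters (x : V) : {x} ∈ A.clusters := ⟨A.emb x, cluster_emb x⟩

theorem nonempty_of_mem_clusters {C : Set V} (h : C ∈ A.clusters) : C.Nonempty := by
  obtain ⟨v, rfl⟩ := h; exact cluster_nonempty v

theorem laminar {C D : Set V} (hC : C ∈ A.clusters) (hD : D ∈ A.clusters) :
    C ⊆ D ∨ D ⊆ C ∨ C ∩ D = ∅ := by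
  obtain ⟨u, rfl⟩ := hC
  obtain ⟨v, rfl⟩ := hD
  by_cases h : (A.cluster u ∩ A.cluster v).Nonempty
  · rcases comparable_of_cluster_inter h with hle | hle
    · exact Or.inl (cluster_mono hle)
    · exact Or.inr (Or.inl (cluster_mono hle))
  · exact Or.inr (Or.inr (Set.not_nonempty_iff_eq_empty.mp h))

end LeafTree

/-! ### Building a tree from a hierarchy -/

section Hierarchy

variable {V : Type} [Fintype V] [DecidableEq V]

/-- A hierarchy: a laminar family containing the universe and all singletons
but not the empty set. -/
def IsHier (H : Set (Set V)) : Prop :=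
  Set.univ ∈ H ∧ (∀ x : V, {x} ∈ H) ∧ ∅ ∉ H ∧
    ∀ C ∈ H, ∀ D ∈ H, C ⊆ D ∨ D ⊆ C ∨ C ∩ D = ∅

namespace IsHier

variable {H : Set (Set V)}

theorem mem_nonempty (hH : IsHier H) {C : Set V} (hC : C ∈ H) : C.Nonempty := by
  rcases Set.eq_empty_or_nonempty C with rfl | h
  · exact absurd hC hH.2.2.1
  · exact h

theorem chain (hH : IsHier H) {C D E : Set V} (hC : C ∈ H) (hD : D ∈ H) (hsub1 : E ⊆ C)
    (hsub2 : E ⊆ D) (hne : E.Nonempty) : C ⊆ D ∨ D ⊆ C := by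
  rcases hH.2.2.2 C hC D hD with h | h | h
  · exact Or.inl h
  · exact Or.inr h
  · exfalso
    obtain ⟨x, hx⟩ := hne
    exact Set.eq_empty_iff_forall_notMem.mp h x ⟨hsub1 hx, hsub2 hx⟩

end IsHier

variable (H : Set (Set V))

open Classical in
/-- The parent map for the hierarchy tree: least strict superset in `H`. -/
noncomputable def hierParent : Option {C : Set V // C ∈ H} → Option {C : Set V // C ∈ H} :=
  fun v => match v with
  | none => none
  | some ⟨C, _⟩ =>
      if h : ∃ D, D ∈ H ∧ C ⊂ D ∧ ∀ E ∈ H, C ⊂ E → D ⊆ E then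
        some ⟨h.choose, h.choose_spec.1⟩
      else none

variable {H}

theorem hierParent_none : hierParent H none = none := rfl

theorem exists_least (hH : IsHier H) {C : Set V} (hC : C ∈ H) (hne : C ≠ Set.univ) :
    ∃ D, D ∈ H ∧ C ⊂ D ∧ ∀ E ∈ H, C ⊂ E → D ⊆ E := by
  classical
  have hfin : {D : Set V | D ∈ H ∧ C ⊂ D}.Finite := Set.toFinite _
  have hne' : hfin.toFinset.Nonempty := by
    rw [Set.Finite.toFinset_nonempty]
    exact ⟨Set.univ, hH.1, Set.ssubset_univ_iff.mpr hne⟩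
  obtain ⟨D, hD, hmin⟩ := Finset.exists_min_image hfin.toFinset (fun D => D.toFinset.card) hne'
  rw [Set.Finite.mem_toFinset] at hD
  refine ⟨D, hD.1, hD.2, fun E hE hCE => ?_⟩
  have hch := hH.chain hD.1 hE (subset_of_ssubset hD.2) (subset_of_ssubset hCE)
    (hH.mem_nonempty hC)
  rcases hch with h | h
  · exact h
  · have hcard := hmin E (by rw [Set.Finite.mem_toFinset]; exact ⟨hE, hCE⟩)
    have hsub : E.toFinset ⊆ D.toFinset := by
      intro x hx; rw [Set.mem_toFinset] at *; exact h hx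
    have := Finset.eq_of_subset_of_card_le hsub hcard
    have hED : E = D := by
      ext x; constructor <;> intro hx
      · exact h hx
      · rw [← Set.mem_toFinset, ← this, Set.mem_toFinset] at hx; exact hx
    rw [hED]

theorem hierParent_spec (hH : IsHier H) {C : Set V} (hC : C ∈ H) (hne : C ≠ Set.univ) :
    ∃ (D : Set V) (hD : D ∈ H), hierParent H (some ⟨C, hC⟩) = some ⟨D, hD⟩ ∧
      C ⊂ D ∧ ∀ E ∈ H, C ⊂ E → D ⊆ E := by
  have h := exists_least hH hC hne
  refine ⟨h.choose, h.choose_spec.1, ?_, h.choose_spec.2.1, h.choose_spec.2.2⟩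
  simp only [hierParent, dif_pos h]

theorem hierParent_univ (hC : Set.univ ∈ H) :
    hierParent H (some ⟨Set.univ, hC⟩) = none := by
  have h : ¬ ∃ D, D ∈ H ∧ Set.univ ⊂ D ∧ ∀ E ∈ H, Set.univ ⊂ E → D ⊆ E := by
    rintro ⟨D, _, hD, -⟩
    exact hD.2 (Set.subset_univ D)
  simp only [hierParent, dif_neg h]

theorem hierParent_eq_none (hH : IsHier H) {C : Set V} (hC : C ∈ H)
    (h : hierParent H (some ⟨C, hC⟩) = none) : C = Set.univ := by
  by_contra hne
  obtain ⟨D, hD, heq, -, -⟩ := hierParent_spec hH hC hne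
  rw [heq] at h; exact Option.some_ne_none _ h

/-- A child of `C` through a given element `x`. -/
theorem exists_hier_child (hH : IsHier H) {C : Set V} (hC : C ∈ H) {x : V}
    (hx : x ∈ C) (hne : ({x} : Set V) ≠ C) :
    ∃ (E : Set V) (hE : E ∈ H), x ∈ E ∧ E ⊂ C ∧
      hierParent H (some ⟨E, hE⟩) = some ⟨C, hC⟩ := by
  classical
  have hfin : {E : Set V | E ∈ H ∧ x ∈ E ∧ E ⊂ C}.Finite := Set.toFinite _
  have hne' : hfin.toFinset.Nonempty := by
    rw [Set.Finite.toFinset_nonempty]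
    exact ⟨{x}, hH.2.1 x, rfl, Set.ssubset_iff_subset_ne.mpr
      ⟨Set.singleton_subset_iff.mpr hx, hne⟩⟩
  obtain ⟨E, hE, hmax⟩ := Finset.exists_max_image hfin.toFinset (fun D => D.toFinset.card) hne'
  rw [Set.Finite.mem_toFinset] at hE
  obtain ⟨hEH, hxE, hEC⟩ := hE
  have hEuniv : E ≠ Set.univ := fun h => (h ▸ hEC).2 (Set.subset_univ C)
  obtain ⟨D, hD, heq, hED, hleast⟩ := hierParent_spec hH hEH hEuniv
  have hDC : D = C := by
    have hsub : D ⊆ C := hleast C hC hEC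
    -- show C ⊆ D: any strict superset F of E in H with F ⊂ C contradicts maximality
    rcases Set.eq_or_ssubset_of_subset hsub with h | h
    · exact h
    · exfalso
      have hmem : D ∈ hfin.toFinset := by
        rw [Set.Finite.mem_toFinset]
        exact ⟨hD, hED.1 hxE, h⟩
      have hcard := hmax D hmem
      have hlt : E.toFinset.card < D.toFinset.card := by
        apply Finset.card_lt_card
        rw [Set.toFinset_ssubset_toFinset]
        exact hED
      omega
  refine ⟨E, hEH, hxE, hEC, ?_⟩
  rw [heq]
  congr 1
  exact Subtype.ext hDC

/-- The tree associated with a hierarchy. -/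
noncomputable def treeOfHier (hH : IsHier H) : LeafTree V := by
  classical
  refine
  { V := Option {C : Set V // C ∈ H}
    fintypeV := Fintype.ofFinite _
    decEqV := Classical.decEq _
    root := none
    parent := hierParent H
    parent_root := rfl
    reach := ?_
    planted := ?_
    phylo := ?_
    emb := fun x => some ⟨{x}, hH.2.1 x⟩
    emb_inj := ?_
    emb_leaf := ?_
    emb_surj := ?_ }
  · -- reach
    intro v
    match v with
    | none => exact ⟨0, rfl⟩
    | some ⟨C, hC⟩ =>
      have key : ∀ n : ℕ, ∀ (C : Set V) (hC : C ∈ H),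
          Fintype.card V - C.toFinset.card = n →
          ∃ m : ℕ, (hierParent H)^[m] (some ⟨C, hC⟩) = none := by
        intro n
        induction n using Nat.strong_induction_on with
        | _ n ih =>
          intro C hC hcard
          by_cases hne : C = Set.univ
          · subst hne
            exact ⟨1, hierParent_univ hC⟩
          · obtain ⟨D, hD, heq, hCD, -⟩ := hierParent_spec hH hC hne
            have hlt : D.toFinset.card > C.toFinset.card := by
              apply Finset.card_lt_card
              rw [Set.toFinset_ssubset_toFinset]
              exact hCD
            have hDb : D.toFinset.card ≤ Fintype.card V := by
              simpa using Finset.card_le_card (Finset.subset_univ D.toFinset)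
            obtain ⟨m, hm⟩ := ih (Fintype.card V - D.toFinset.card) (by omega) D hD rfl
            exact ⟨m + 1, by
              rw [Function.iterate_add_apply, Function.iterate_one, heq, hm]⟩
      exact key _ C hC rfl
  · -- planted
    refine ⟨some ⟨Set.univ, hH.1⟩, ⟨by simp, hierParent_univ hH.1⟩, ?_⟩
    rintro (_ | ⟨C, hC⟩) ⟨hne, hp⟩
    · exact absurd rfl hne
    · have := hierParent_eq_none hH hC hp
      subst this; rfl
  · -- phylo
    rintro (_ | ⟨C, hC⟩) hne ⟨u, hu, hune⟩
    · exact absurd rfl hne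
    · match u, hu, hune with
      | none, hu, _ => exact absurd hu (by simp [hierParent_none])
      | some ⟨D, hD⟩, hu, hune =>
        have hDuniv : D ≠ Set.univ := by
          intro h; subst h; rw [hierParent_univ hD] at hu; exact nomatch hu
        obtain ⟨D', hD', heq, hDD', hleast⟩ := hierParent_spec hH hD hDuniv
        have hval : D' = C :=
          congrArg Subtype.val (Option.some_injective _ (heq.symm.trans hu))
        have hDC : D ⊂ C := hval ▸ hDD'
        obtain ⟨x, hxC, hxD⟩ := Set.exists_of_ssubset hDC
        have hsing : ({x} : Set V) ≠ C := by
          intro h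
          have : D ⊂ {x} := h ▸ hDC
          have : D = ∅ := by
            rcases Set.eq_empty_or_nonempty D with h' | h'
            · exact h'
            · exfalso
              obtain ⟨y, hy⟩ := h'
              have := this.1 hy
              simp at this
              subst this
              exact hxD hy
          exact hH.2.2.1 (this ▸ hD)
        obtain ⟨E, hE, hxE, hEC, hEp⟩ := exists_hier_child hH hC hxC hsing
        refine ⟨some ⟨D, hD⟩, some ⟨E, hE⟩, hu, hEp, ?_, ?_, ?_⟩
        · intro h
          have := congrArg (fun o => Option.map Subtype.val o) h
          simp only [Option.map_some] at this
          have : D = E := Option.some_injective _ this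
          subst this
          exact hxD hxE
        · intro h
          have : D = C := by
            have := Option.some_injective _ h
            exact congrArg Subtype.val this
          exact hDC.2 (this ▸ subset_refl _)
        · intro h
          have : E = C := by
            have := Option.some_injective _ h
            exact congrArg Subtype.val this
          exact hEC.2 (this ▸ subset_refl _)
  · -- emb_inj
    intro x y h
    simp only [Option.some_inj] at h
    have := congrArg Subtype.val h
    simp only at this
    exact Set.singleton_eq_singleton_iff.mp this
  · -- emb_leaf
    intro x
    rintro (_ | ⟨D, hD⟩) hp
    · exact hp
    · exfalso
      have hp' : hierParent H (some ⟨D, hD⟩) = some ⟨{x}, hH.2.1 x⟩ := hp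
      have hDuniv : D ≠ Set.univ := by
        intro h; subst h; rw [hierParent_univ hD] at hp'; exact nomatch hp'
      obtain ⟨D', hD', heq, hDD', -⟩ := hierParent_spec hH hD hDuniv
      rw [heq] at hp'
      have hval : D' = {x} := by
        have := Option.some_injective _ hp'
        exact congrArg Subtype.val this
      subst hval
      have : D = ∅ := by
        rcases Set.eq_empty_or_nonempty D with h' | h'
        · exact h'
        · exfalso
          obtain ⟨y, hy⟩ := h'
          have hyx := hDD'.1 hy
          simp at hyx
          subst hyx
          exact (hDD'.2 (Set.singleton_subset_iff.mpr hy)).elim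
      exact hH.2.2.1 (this ▸ hD)
  · -- emb_surj
    rintro (_ | ⟨C, hC⟩) hleaf
    · exfalso
      have := hleaf (some ⟨Set.univ, hH.1⟩) (hierParent_univ hH.1)
      exact nomatch this
    · obtain ⟨x, hx⟩ := IsHier.mem_nonempty hH hC
      by_cases hsing : ({x} : Set V) = C
      · exact ⟨x, congrArg some (Subtype.ext hsing)⟩
      · exfalso
        obtain ⟨E, hE, hxE, hEC, hEp⟩ := exists_hier_child hH hC hx hsing
        have := hleaf (some ⟨E, hE⟩) hEp
        have hval : E = C := by
          have := Option.some_injective _ this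
          exact congrArg Subtype.val this
        exact hEC.2 (hval ▸ subset_refl _)

end Hierarchy

section Hierarchy2

variable {V : Type} [Fintype V] [DecidableEq V] {H : Set (Set V)}

theorem hierParent_iterate_none (n : ℕ) : (hierParent H)^[n] none = none := by
  induction n with
  | zero => rfl
  | succ k ih => rw [Function.iterate_succ_apply, hierParent_none, ih]

theorem treeOfHier_le_some (hH : IsHier H) {C D : Set V} (hC : C ∈ H) (hD : D ∈ H) :
    (treeOfHier hH).toPPTree.le (some ⟨C, hC⟩) (some ⟨D, hD⟩) ↔ C ⊆ D := by
  classical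
  constructor
  · rintro ⟨n, hn⟩
    have key : ∀ n : ℕ, ∀ (C : Set V) (hC : C ∈ H),
        (hierParent H)^[n] (some ⟨C, hC⟩) = some ⟨D, hD⟩ → C ⊆ D := by
      intro n
      induction n with
      | zero =>
        intro C hC h
        have h2 : C = D := congrArg Subtype.val (Option.some_injective _ h)
        exact h2 ▸ subset_refl _
      | succ k ih =>
        intro C hC h
        rw [Function.iterate_succ_apply] at h
        by_cases hne : C = Set.univ
        · subst hne
          rw [hierParent_univ hC, hierParent_iterate_none] at h
          exact nomatch h
        · obtain ⟨C', hC', heq, hCC', -⟩ := hierParent_spec hH hC hne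
          rw [heq] at h
          exact subset_trans (subset_of_ssubset hCC') (ih C' hC' h)
    exact key n C hC hn
  · intro hsub
    have key : ∀ n : ℕ, ∀ (C : Set V) (hC : C ∈ H),
        D.toFinset.card - C.toFinset.card = n → C ⊆ D →
        (treeOfHier hH).toPPTree.le (some ⟨C, hC⟩) (some ⟨D, hD⟩) := by
      intro n
      induction n using Nat.strong_induction_on with
      | _ n ih =>
        intro C hC hcard hsub
        rcases Set.eq_or_ssubset_of_subset hsub with rfl | hss
        · exact ⟨0, rfl⟩
        · have hne : C ≠ Set.univ := by
            intro h; exact (h ▸ hss).2 (Set.subset_univ D)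
          obtain ⟨C', hC', heq, hCC', hleast⟩ := hierParent_spec hH hC hne
          have hC'D : C' ⊆ D := hleast D hD hss
          have hlt : C.toFinset.card < C'.toFinset.card :=
            Finset.card_lt_card (Set.toFinset_ssubset_toFinset.mpr hCC')
          have hle : C'.toFinset.card ≤ D.toFinset.card :=
            Finset.card_le_card (Set.toFinset_subset_toFinset.mpr hC'D)
          obtain ⟨m, hm⟩ := ih (D.toFinset.card - C'.toFinset.card) (by omega) C' hC' rfl hC'D
          exact ⟨m + 1, by
            show (hierParent H)^[m + 1] (some ⟨C, hC⟩) = some ⟨D, hD⟩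
            rw [Function.iterate_add_apply, Function.iterate_one]
            show (hierParent H)^[m] (hierParent H (some ⟨C, hC⟩)) = _
            rw [heq]; exact hm⟩
    exact key _ C hC rfl hsub

theorem treeOfHier_cluster_some (hH : IsHier H) {C : Set V} (hC : C ∈ H) :
    (treeOfHier hH).cluster (some ⟨C, hC⟩) = C := by
  ext y
  show (treeOfHier hH).toPPTree.le (some ⟨{y}, hH.2.1 y⟩) (some ⟨C, hC⟩) ↔ y ∈ C
  rw [treeOfHier_le_some hH]
  simp

theorem treeOfHier_clusters (hH : IsHier H) : (treeOfHier hH).clusters = H := by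
  ext C
  constructor
  · rintro ⟨v, rfl⟩
    match v with
    | none =>
      have : (treeOfHier hH).cluster none = Set.univ := by
        apply Set.eq_univ_of_forall
        intro x
        exact PPTree.le_root _
      rw [this]; exact hH.1
    | some ⟨D, hD⟩ => rw [treeOfHier_cluster_some hH hD]; exact hD
  · intro hC
    exact ⟨some ⟨C, hC⟩, treeOfHier_cluster_some hH hC⟩

end Hierarchy2

/-! ### BMG theory -/

theorem PPTree.lca_comm (T : PPTree) (x y : T.V) : T.lca x y = T.lca y x :=
  PPTree.le_antisymm
    (PPTree.lca_le x y (PPTree.le_lca_right y x) (PPTree.le_lca_left y x))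
    (PPTree.lca_le y x (PPTree.le_lca_right x y) (PPTree.le_lca_left x y))

theorem PPTree.le_child_or_ge {T : PPTree} {x c v r : T.V} (hc : T.parent c = v)
    (hx : T.le x c) (hr : T.le x r) : T.le r c ∨ T.le v r := by
  rcases PPTree.le_total_of_le hx hr with h | h
  · by_cases hcr : c = r
    · exact Or.inl (hcr ▸ PPTree.le_refl r)
    · exact Or.inr (hc ▸ PPTree.parent_le_of_lt h hcr)
  · exact Or.inl h

theorem rtg_cross {α : Type*} {r : α → α → Prop} {P : α → Prop} {u v : α}
    (h : Relation.ReflTransGen r u v) :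
    P u → ¬ P v → ∃ x y, Relation.ReflTransGen r u x ∧ r x y ∧ P x ∧ ¬ P y := by
  induction h with
  | refl => intro hu hv; exact absurd hu hv
  | @tail b c hub hbc ih =>
    intro hu hv
    by_cases hb : P b
    · exact ⟨b, c, hub, hbc, hb, hv⟩
    · exact ih hu hb

section BMGCore

variable {V Y : Type} [Fintype V] [DecidableEq V]

/-- lca of two leaves. -/
noncomputable def lcaL (A : LeafTree V) (x y : V) : A.toPPTree.V :=
  A.toPPTree.lca (A.emb x) (A.emb y)

/-- Edge of the Aho graph of informative triples within the leaf set `C`. -/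
def AhoEdge (G : V → V → Prop) (σ : V → Y) (C : Set V) (a b : V) : Prop :=
  a ∈ C ∧ b ∈ C ∧
    ((∃ c ∈ C, Informative G σ a b c) ∨ (∃ c ∈ C, Informative G σ b a c))

/-- Connectivity in the Aho graph. -/
def AhoConn (G : V → V → Prop) (σ : V → Y) (C : Set V) : V → V → Prop :=
  Relation.ReflTransGen (AhoEdge G σ C)

theorem ahoEdge_symm {G : V → V → Prop} {σ : V → Y} {C : Set V} {a b : V}
    (h : AhoEdge G σ C a b) : AhoEdge G σ C b a :=
  ⟨h.2.1, h.1, h.2.2.symm⟩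

theorem ahoConn_symm {G : V → V → Prop} {σ : V → Y} {C : Set V} {a b : V}
    (h : AhoConn G σ C a b) : AhoConn G σ C b a := by
  induction h with
  | refl => exact Relation.ReflTransGen.refl
  | tail _ he ih => exact Relation.ReflTransGen.head (ahoEdge_symm he) ih

theorem ahoConn_mem {G : V → V → Prop} {σ : V → Y} {C : Set V} {a b : V}
    (ha : a ∈ C) (h : AhoConn G σ C a b) : b ∈ C := by
  induction h with
  | refl => exact ha
  | tail _ he _ => exact he.2.1

variable {G : V → V → Prop} {σ : V → Y} {A : LeafTree V}

theorem arc_le (hA : Explains A σ G) {x y : V} (h : G x y) :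
    ∀ y', σ y' = σ y → A.toPPTree.le (lcaL A x y) (lcaL A x y') :=
  fun y' hy' => ((hA x y).1 h).2 y' hy'

theorem arc_sigma_ne (hA : Explains A σ G) {x y : V} (h : G x y) : σ x ≠ σ y :=
  ((hA x y).1 h).1

theorem mk_arc (hA : Explains A σ G) {x y : V} (hσ : σ x ≠ σ y)
    (h : ∀ y', σ y' = σ y → A.toPPTree.le (lcaL A x y) (lcaL A x y')) : G x y :=
  (hA x y).2 ⟨hσ, h⟩

/-- For any leaf and any color present, there is a best match. -/
theorem exists_arc (hA : Explains A σ G) (x y : V) (hσ : σ x ≠ σ y) :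
    ∃ y'', σ y'' = σ y ∧ G x y'' := by
  classical
  let s : Finset V := Finset.univ.filter (fun y' => σ y' = σ y)
  have hs : s.Nonempty := ⟨y, by simp [s]⟩
  obtain ⟨y'', hy'', hmax⟩ := s.exists_max_image
    (fun y' => A.toPPTree.ht (lcaL A x y')) hs
  simp only [s, Finset.mem_filter, Finset.mem_univ, true_and] at hy'' hmax
  refine ⟨y'', hy'', mk_arc hA (hy'' ▸ hσ) fun y' hy' => ?_⟩
  have h1 : A.toPPTree.le (A.emb x) (lcaL A x y'') := PPTree.le_lca_left _ _
  have h2 : A.toPPTree.le (A.emb x) (lcaL A x y') := PPTree.le_lca_left _ _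
  rcases PPTree.le_total_of_le h1 h2 with h | h
  · exact h
  · by_cases heq : lcaL A x y' = lcaL A x y''
    · rw [heq]; exact PPTree.le_refl _
    · exfalso
      have := PPTree.ht_lt_of_lt h heq
      have := hmax y' (hy'.trans hy'')
      omega

theorem informative_lt (hA : Explains A σ G) {a b c : V}
    (h : Informative G σ a b c) : A.toPPTree.lt (lcaL A a b) (lcaL A a c) := by
  obtain ⟨h1, h2, h3, h4, h5, h6, h7⟩ := h
  have hle : A.toPPTree.le (lcaL A a b) (lcaL A a c) := arc_le hA h6 c h5.symm
  refine ⟨hle, fun heq => ?_⟩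
  apply h7
  apply mk_arc hA (fun hh => h4 (hh.trans h5.symm))
  intro y' hy'
  rw [← heq]
  exact arc_le hA h6 y' (hy'.trans h5.symm)

theorem forbidden_eq (hA : Explains A σ G) {a b c : V}
    (h : Forbidden G σ a b c) : lcaL A a b = lcaL A a c := by
  obtain ⟨h1, h2, h3, h4, h5, h6, h7⟩ := h
  exact PPTree.le_antisymm (arc_le hA h6 c h5.symm)
    (by
      have := arc_le hA h7 b h5
      exact this)

/-- **Key lemma**: every connected component of the Aho graph on a cluster `C`
of a tree explaining `(G,σ)` is itself a cluster of that tree. -/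
theorem ahoComp_mem_clusters (hA : Explains A σ G) {C : Set V}
    (hC : C ∈ A.clusters) {a : V} (ha : a ∈ C) :
    {b | AhoConn G σ C a b} ∈ A.clusters := by
  classical
  set T := A.toPPTree with hT
  set K : Set V := {b | AhoConn G σ C a b} with hK
  obtain ⟨u₀, hu₀⟩ := hC
  have haK : a ∈ K := Relation.ReflTransGen.refl
  have hKC : K ⊆ C := fun b hb => ahoConn_mem ha hb
  have hKne : (A.emb '' K).Nonempty := ⟨A.emb a, a, haK, rfl⟩
  set w : T.V := T.lcaSet (A.emb '' K) with hw
  obtain ⟨hw1, hw2⟩ := PPTree.lcaSet_spec hKne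
  have hwK : ∀ t ∈ K, T.le (A.emb t) w := fun t ht => hw1 _ ⟨t, ht, rfl⟩
  have hwu₀ : T.le w u₀ := by
    apply hw2 u₀
    rintro l ⟨t, ht, rfl⟩
    have h2 : t ∈ A.cluster u₀ := by rw [hu₀]; exact hKC ht
    exact h2
  have hclw : A.cluster w ⊆ C := fun t htw => by
    rw [← hu₀]
    exact (PPTree.le_trans htw hwu₀ : A.toPPTree.le (A.emb t) u₀)
  suffices hgoal : A.cluster w = K by exact ⟨w, hgoal⟩
  apply Set.Subset.antisymm _ (fun t ht => hwK t ht)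
  by_contra hsub
  obtain ⟨z₀, hz₀w, hz₀K⟩ := Set.not_subset.mp hsub
  -- choose a pair (k, z) maximizing the height of the lca
  let S : Set (V × V) := {pr | pr.1 ∈ K ∧ pr.2 ∈ A.cluster w ∧ pr.2 ∉ K}
  have hSfin : S.Finite := Set.toFinite _
  have hSne : hSfin.toFinset.Nonempty := by
    rw [Set.Finite.toFinset_nonempty]; exact ⟨(a, z₀), haK, hz₀w, hz₀K⟩
  obtain ⟨⟨k, z⟩, hkz, hmax⟩ := hSfin.toFinset.exists_max_image
    (fun pr => T.ht (lcaL A pr.1 pr.2)) hSne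
  rw [Set.Finite.mem_toFinset] at hkz
  obtain ⟨hkK, hzw, hzK⟩ := hkz
  have hmax' : ∀ t z', t ∈ K → z' ∈ A.cluster w → z' ∉ K →
      T.ht (lcaL A t z') ≤ T.ht (lcaL A k z) := by
    intro t z' h1 h2 h3
    exact hmax (t, z') (by rw [Set.Finite.mem_toFinset]; exact ⟨h1, h2, h3⟩)
  set p : T.V := lcaL A k z with hp
  have hkz_ne : k ≠ z := fun h => hzK (h ▸ hkK)
  have hkp : T.le (A.emb k) p := PPTree.le_lca_left _ _
  have hzp : T.le (A.emb z) p := PPTree.le_lca_right _ _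
  have hpw : T.le p w := PPTree.lca_le _ _ (hwK k hkK) hzw
  have hp_ne_root : p ≠ T.root := by
    intro h
    have hprho : T.le p T.rho :=
      PPTree.lca_le _ _ (PPTree.le_rho (LeafTree.emb_ne_root k))
        (PPTree.le_rho (LeafTree.emb_ne_root z))
    rw [h] at hprho
    exact T.rho_ne_root (PPTree.root_le hprho)
  have hek_ne_p : A.emb k ≠ p := by
    intro h
    apply hkz_ne
    apply A.emb_inj
    exact (PPTree.leaf_le (A.emb_leaf k) (h ▸ hzp)).symm
  have hez_ne_p : A.emb z ≠ p := by
    intro h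
    apply hkz_ne
    apply A.emb_inj
    exact PPTree.leaf_le (A.emb_leaf z) (h ▸ hkp)
  obtain ⟨p₁, hp₁, hp₁ne, hkp₁⟩ := PPTree.exists_child_le hkp hek_ne_p hp_ne_root
  obtain ⟨p₂, hp₂, hp₂ne, hzp₂⟩ := PPTree.exists_child_le hzp hez_ne_p hp_ne_root
  have hp₁₂ : p₁ ≠ p₂ := by
    intro h
    apply hp₁ne
    apply PPTree.le_antisymm (hp₁ ▸ PPTree.le_parent p₁)
    exact PPTree.lca_le _ _ hkp₁ (h ▸ hzp₂)
  have hp₂p : T.le p₂ p := hp₂ ▸ PPTree.le_parent p₂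
  have hclp₂ : ∀ t, T.le (A.emb t) p₂ → t ∈ C := by
    intro t h
    apply hclw
    exact PPTree.le_trans (PPTree.le_trans h hp₂p) hpw
  have hclp₂w : ∀ t, T.le (A.emb t) p₂ → t ∈ A.cluster w := by
    intro t h
    exact PPTree.le_trans (PPTree.le_trans h hp₂p) hpw
  -- (M): no element of K lies below p₂
  have hM : ∀ t, t ∈ K → ¬ T.le (A.emb t) p₂ := by
    intro t ht hle
    have h1 : T.le (lcaL A t z) p₂ := PPTree.lca_le _ _ hle hzp₂
    have h2 : T.lt (lcaL A t z) p := PPTree.lt_of_le_of_lt' h1 ⟨hp₂p, hp₂ne⟩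
    have h3 := PPTree.ht_lt_of_lt h2.1 h2.2
    have h4 := hmax' t z ht hzw hzK
    omega
  have hzC : z ∈ C := hclp₂ z hzp₂
  -- the cut: K is not entirely below p₁
  have hcut : ∃ t, t ∈ K ∧ ¬ T.le (A.emb t) p₁ := by
    by_contra hall
    push_neg at hall
    have hwp₁ : T.le w p₁ := hw2 p₁ (by rintro l ⟨t, ht, rfl⟩; exact hall t ht)
    exact PPTree.children_disjoint hp_ne_root hp₁ hp₂ hp₁₂
      (PPTree.le_trans hzw hwp₁) hzp₂
  obtain ⟨kstar, hkstarK, hkstarp₁⟩ := hcut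
  have hconn : AhoConn G σ C k kstar :=
    Relation.ReflTransGen.trans (ahoConn_symm hkK) hkstarK
  obtain ⟨x, w', hpath, hedge, hPx, hPw'⟩ :=
    rtg_cross (P := fun t => T.le (A.emb t) p₁) hconn hkp₁ hkstarp₁
  have hxK : x ∈ K := Relation.ReflTransGen.trans hkK hpath
  have hw'K : w' ∈ K := Relation.ReflTransGen.tail hxK hedge
  obtain ⟨hxC, hw'C, horient⟩ := hedge
  set q : T.V := lcaL A x w' with hq
  have hxq : T.le (A.emb x) q := PPTree.le_lca_left _ _
  have hw'q : T.le (A.emb w') q := PPTree.le_lca_right _ _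
  have hp₁q : T.le p₁ q := by
    rcases PPTree.le_total_of_le hPx hxq with h | h
    · exact h
    · exact absurd (PPTree.le_trans hw'q h) hPw'
  have hp₁q_ne : p₁ ≠ q := fun heq => hPw' (heq ▸ hw'q)
  have hpq : T.le p q := hp₁ ▸ PPTree.parent_le_of_lt hp₁q hp₁q_ne
  have hzq : T.le (A.emb z) q := PPTree.le_trans (PPTree.le_trans hzp₂ hp₂p) hpq
  have hxp : T.le (A.emb x) p := PPTree.le_trans hPx (hp₁ ▸ PPTree.le_parent p₁)
  have hp₂q : T.le p₂ q := PPTree.le_trans hp₂p hpq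
  rcases horient with ⟨c', hc'C, hinf⟩ | ⟨c', hc'C, hinf⟩
  · -- orientation A : Informative x w' c'
    obtain ⟨hne1, hne2, hne3, hσxw', hσw'c', hGxw', hnGxc'⟩ := hinf
    have A1 : ∀ y', σ y' = σ w' → T.le q (lcaL A x y') := arc_le hA hGxw'
    have keyA : ¬ T.le (A.emb c') q := by
      intro hc'q
      apply hnGxc'
      apply mk_arc hA (fun h => hσxw' (h.trans hσw'c'.symm))
      intro y' hy'
      have h1 : T.le (lcaL A x c') q := PPTree.lca_le _ _ hxq hc'q
      exact PPTree.le_trans h1 (A1 y' (hy'.trans hσw'c'.symm))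
    by_cases hy₂ : ∃ y₂, T.le (A.emb y₂) p₂ ∧ σ y₂ = σ w'
    · obtain ⟨y₂, hy₂p, hy₂σ⟩ := hy₂
      have hy₂q : T.le (A.emb y₂) q := PPTree.le_trans hy₂p hp₂q
      have hGxy₂ : G x y₂ := by
        apply mk_arc hA (fun h => hσxw' (h.trans hy₂σ))
        intro y' hy'
        have h1 : T.le (lcaL A x y₂) p :=
          PPTree.lca_le _ _ hxp (PPTree.le_trans hy₂p hp₂p)
        exact PPTree.le_trans h1 (PPTree.le_trans hpq (A1 y' (hy'.trans hy₂σ)))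
      have hinf2 : Informative G σ x y₂ c' := by
        refine ⟨?_, hne2, ?_, ?_, hy₂σ.trans hσw'c', hGxy₂, hnGxc'⟩
        · intro h; exact hσxw' ((congrArg σ h).trans hy₂σ)
        · intro h; exact keyA (h ▸ hy₂q)
        · intro h; exact hσxw' (h.trans hy₂σ)
      have hedge2 : AhoEdge G σ C x y₂ := ⟨hxC, hclp₂ y₂ hy₂p, Or.inl ⟨c', hc'C, hinf2⟩⟩
      have hy₂K : y₂ ∈ K := Relation.ReflTransGen.tail hxK hedge2
      exact hM y₂ hy₂K hy₂p
    · push_neg at hy₂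
      have hσzw' : σ z ≠ σ w' := hy₂ z hzp₂
      have hGzw' : G z w' := by
        apply mk_arc hA hσzw'
        intro y' hy'
        have hlzw : T.le (lcaL A z w') q := PPTree.lca_le _ _ hzq hw'q
        have hzr : T.le (A.emb z) (lcaL A z y') := PPTree.le_lca_left _ _
        rcases PPTree.le_total_of_le hzq hzr with h | h
        · exact PPTree.le_trans hlzw h
        · by_cases heq : lcaL A z y' = q
          · rw [heq]; exact hlzw
          · rcases PPTree.le_child_or_ge hp₂ hzp₂ hzr with h2 | h2
            · exact absurd hy' (hy₂ y' (PPTree.le_trans (PPTree.le_lca_right _ _) h2))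
            · exfalso
              apply heq
              apply PPTree.le_antisymm h
              have hxy'r : T.le (T.lca (A.emb x) (A.emb y')) (lcaL A z y') :=
                PPTree.lca_le _ _ (PPTree.le_trans hxp h2) (PPTree.le_lca_right _ _)
              exact PPTree.le_trans (A1 y' hy') hxy'r
      have hnGzc' : ¬ G z c' := by
        intro hGzc'
        apply keyA
        have h1 := ((hA z c').1 hGzc').2 w' hσw'c'
        have h2 : T.le (lcaL A z w') q := PPTree.lca_le _ _ hzq hw'q
        exact PPTree.le_trans (PPTree.le_trans (PPTree.le_lca_right _ _) h1) h2
      have hinf2 : Informative G σ z w' c' :=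
        ⟨fun h => hσzw' (congrArg σ h),
         fun h => hσzw' ((congrArg σ h).trans hσw'c'.symm),
         fun h => keyA (h ▸ hw'q), hσzw', hσw'c', hGzw', hnGzc'⟩
      have hedge2 : AhoEdge G σ C z w' := ⟨hclp₂ z hzp₂, hw'C, Or.inl ⟨c', hc'C, hinf2⟩⟩
      have hzK' : z ∈ K := Relation.ReflTransGen.tail hw'K (ahoEdge_symm hedge2)
      exact hzK hzK'
  · -- orientation B : Informative w' x c'
    obtain ⟨hne1, hne2, hne3, hσw'x, hσxc', hGw'x, hnGw'c'⟩ := hinf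
    have hq' : lcaL A w' x = q := T.lca_comm (A.emb w') (A.emb x)
    have B1 : ∀ y', σ y' = σ x → T.le q (lcaL A w' y') := by
      intro y' hy'
      have h0 := arc_le hA hGw'x y' hy'
      rwa [hq'] at h0
    have keyB : ¬ T.le (A.emb c') q := by
      intro hc'q
      apply hnGw'c'
      apply mk_arc hA (fun h => hσw'x (h.trans hσxc'.symm))
      intro y' hy'
      have h1 : T.le (lcaL A w' c') q := PPTree.lca_le _ _ hw'q hc'q
      exact PPTree.le_trans h1 (B1 y' (hy'.trans hσxc'.symm))
    by_cases hy₂ : ∃ y₂, T.le (A.emb y₂) p₂ ∧ σ y₂ = σ x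
    · obtain ⟨y₂, hy₂p, hy₂σ⟩ := hy₂
      have hy₂q : T.le (A.emb y₂) q := PPTree.le_trans hy₂p hp₂q
      have hGw'y₂ : G w' y₂ := by
        apply mk_arc hA (fun h => hσw'x (h.trans hy₂σ))
        intro y' hy'
        have h1 : T.le (lcaL A w' y₂) q := PPTree.lca_le _ _ hw'q hy₂q
        exact PPTree.le_trans h1 (B1 y' (hy'.trans hy₂σ))
      have hinf2 : Informative G σ w' y₂ c' := by
        refine ⟨?_, hne2, ?_, ?_, hy₂σ.trans hσxc', hGw'y₂, hnGw'c'⟩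
        · intro h; exact hσw'x ((congrArg σ h).trans hy₂σ)
        · intro h; exact keyB (h ▸ hy₂q)
        · intro h; exact hσw'x (h.trans hy₂σ)
      have hedge2 : AhoEdge G σ C w' y₂ := ⟨hw'C, hclp₂ y₂ hy₂p, Or.inl ⟨c', hc'C, hinf2⟩⟩
      have hy₂K : y₂ ∈ K := Relation.ReflTransGen.tail hw'K hedge2
      exact hM y₂ hy₂K hy₂p
    · push_neg at hy₂
      have hσzx : σ z ≠ σ x := hy₂ z hzp₂
      have hzp' : T.le (A.emb z) p := PPTree.le_trans hzp₂ hp₂p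
      have hGzx : G z x := by
        apply mk_arc hA hσzx
        intro y' hy'
        have hlzx : T.le (lcaL A z x) p := PPTree.lca_le _ _ hzp' hxp
        have hzr : T.le (A.emb z) (lcaL A z y') := PPTree.le_lca_left _ _
        rcases PPTree.le_total_of_le hzp' hzr with h | h
        · exact PPTree.le_trans hlzx h
        · by_cases heq : lcaL A z y' = p
          · rw [heq]; exact hlzx
          · rcases PPTree.le_child_or_ge hp₂ hzp₂ hzr with h2 | h2
            · exact absurd hy' (hy₂ y' (PPTree.le_trans (PPTree.le_lca_right _ _) h2))
            · exact absurd (PPTree.le_antisymm h h2) heq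
      have hnGzc' : ¬ G z c' := by
        intro hGzc'
        apply keyB
        have h1 := ((hA z c').1 hGzc').2 x hσxc'
        have h2 : T.le (lcaL A z x) p := PPTree.lca_le _ _ hzp' hxp
        exact PPTree.le_trans (PPTree.le_trans (PPTree.le_lca_right _ _) h1)
          (PPTree.le_trans h2 hpq)
      have hinf2 : Informative G σ z x c' :=
        ⟨fun h => hσzx (congrArg σ h),
         fun h => hσzx ((congrArg σ h).trans hσxc'.symm),
         hne3, hσzx, hσxc', hGzx, hnGzc'⟩
      have hedge2 : AhoEdge G σ C z x := ⟨hclp₂ z hzp₂, hxC, Or.inl ⟨c', hc'C, hinf2⟩⟩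
      have hzK' : z ∈ K := Relation.ReflTransGen.tail hxK (ahoEdge_symm hedge2)
      exact hzK hzK'

end BMGCore

section CharIso

variable {V Y : Type} [Fintype V] [DecidableEq V] {G : V → V → Prop} {σ : V → Y}

/-- `A` displays the triple `ab|c`. -/
def DispT (A : LeafTree V) (a b c : V) : Prop :=
  A.toPPTree.lt (lcaL A a b) (lcaL A a c)

theorem dispT_iff_cluster (A : LeafTree V) (a b c : V) :
    DispT A a b c ↔ ∃ C ∈ A.clusters, a ∈ C ∧ b ∈ C ∧ c ∉ C := by
  constructor
  · intro h
    refine ⟨A.cluster (lcaL A a b), ⟨_, rfl⟩, PPTree.le_lca_left _ _,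
      PPTree.le_lca_right _ _, fun hc => ?_⟩
    have h2 : A.toPPTree.le (lcaL A a c) (lcaL A a b) :=
      PPTree.lca_le _ _ (PPTree.le_lca_left _ _) hc
    exact h.2 (PPTree.le_antisymm h.1 h2)
  · rintro ⟨C, ⟨v, rfl⟩, haC, hbC, hcC⟩
    have hab : A.toPPTree.le (lcaL A a b) v := PPTree.lca_le _ _ haC hbC
    rcases PPTree.le_total_of_le (PPTree.le_lca_left (A.emb a) (A.emb b))
      (PPTree.le_lca_left (A.emb a) (A.emb c)) with h | h
    · refine ⟨h, fun heq => hcC ?_⟩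
      have h3 : A.toPPTree.le (A.emb c) (lcaL A a b) := by
        rw [heq]; exact PPTree.le_lca_right _ _
      exact PPTree.le_trans h3 hab
    · exact absurd (PPTree.le_trans (PPTree.le_trans (PPTree.le_lca_right _ _) h) hab) hcC

/-- Characterization: a tree explains the BMG `(G,σ)` iff it displays all
informative triples and no forbidden ones. -/
theorem explains_iff {A₀ : LeafTree V} (hW : Explains A₀ σ G) (A : LeafTree V) :
    Explains A σ G ↔
      (∀ a b c, Informative G σ a b c → DispT A a b c) ∧
      (∀ a b c, Forbidden G σ a b c → ¬ DispT A a b c) := by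
  constructor
  · intro hA
    refine ⟨fun a b c h => informative_lt hA h, fun a b c h hd => ?_⟩
    exact hd.2 (forbidden_eq hA h)
  · rintro ⟨hI, hF⟩ x y
    constructor
    · intro hG
      have hσ : σ x ≠ σ y := arc_sigma_ne hW hG
      refine ⟨hσ, fun y' hy' => ?_⟩
      by_cases hyy : y' = y
      · subst hyy; exact PPTree.le_refl _
      by_cases hG' : G x y'
      · -- forbidden triple
        have hσ' : σ x ≠ σ y' := arc_sigma_ne hW hG'
        have hfb : Forbidden G σ x y' y :=
          ⟨fun h => hσ' (congrArg σ h), fun h => hσ (congrArg σ h), hyy,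
           hσ', hy', hG', hG⟩
        have hnd := hF x y' y hfb
        rcases PPTree.le_total_of_le (PPTree.le_lca_left (A.emb x) (A.emb y))
          (PPTree.le_lca_left (A.emb x) (A.emb y')) with h | h
        · exact h
        · by_cases heq : lcaL A x y' = lcaL A x y
          · have h2 : A.toPPTree.le (lcaL A x y) (lcaL A x y') := by
              rw [heq]; exact PPTree.le_refl _
            exact h2
          · exact absurd ⟨h, heq⟩ hnd
      · have hinf : Informative G σ x y y' :=
          ⟨fun h => hσ (congrArg σ h), fun h => (hy' ▸ hσ : σ x ≠ σ y') (congrArg σ h),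
           Ne.symm hyy, hσ, hy'.symm, hG, hG'⟩
        exact (hI x y y' hinf).1
    · intro hbm
      by_contra hG
      obtain ⟨y'', hy''σ, hGxy''⟩ := exists_arc hW x y hbm.1
      have hyy'' : y'' ≠ y := fun h => hG (h ▸ hGxy'')
      have hinf : Informative G σ x y'' y :=
        ⟨fun h => arc_sigma_ne hW hGxy'' (congrArg σ h),
         fun h => hbm.1 (congrArg σ h), hyy'', arc_sigma_ne hW hGxy'', hy''σ, hGxy'', hG⟩
      have hd := hI x y'' y hinf
      exact hd.2 (PPTree.le_antisymm hd.1 (hbm.2 y'' hy''σ))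

theorem cluster_univ_unique {A : LeafTree V} {v : A.toPPTree.V} (hv : v ≠ A.root)
    (h : A.cluster v = Set.univ) : v = A.toPPTree.rho :=
  LeafTree.cluster_inj hv A.toPPTree.rho_ne_root (h.trans LeafTree.cluster_rho.symm)

theorem cluster_parent_least {A : LeafTree V} {v : A.toPPTree.V} (hv : v ≠ A.root)
    (hpv : A.toPPTree.parent v ≠ A.root) :
    A.cluster v ⊂ A.cluster (A.toPPTree.parent v) ∧
      ∀ D ∈ A.clusters, A.cluster v ⊂ D → A.cluster (A.toPPTree.parent v) ⊆ D := by
  constructor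
  · exact LeafTree.cluster_ssubset (PPTree.le_parent v)
      (Ne.symm (PPTree.parent_ne_self hv)) hpv
  · rintro D ⟨u, rfl⟩ hvu
    have hcomp : A.toPPTree.le v u ∨ A.toPPTree.le u v := by
      apply LeafTree.comparable_of_cluster_inter
      obtain ⟨t, ht⟩ := LeafTree.cluster_nonempty (A := A) v
      exact ⟨t, ht, hvu.1 ht⟩
    rcases hcomp with hle | hle
    · have hne : v ≠ u := by
        rintro rfl
        exact hvu.2 (subset_refl _)
      exact LeafTree.cluster_mono (PPTree.parent_le_of_lt hle hne)
    · exact absurd (LeafTree.cluster_mono hle) hvu.2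

/-- Two trees with equal cluster sets are isomorphic fixing the leaves. -/
theorem leafIso_of_clusters_eq {A B : LeafTree V} (h : A.clusters = B.clusters) :
    LeafIso A B := by
  classical
  have ex : ∀ (A B : LeafTree V), A.clusters = B.clusters →
      ∀ v : A.toPPTree.V, v ≠ A.root →
      ∃ u : B.toPPTree.V, u ≠ B.root ∧ B.cluster u = A.cluster v := by
    intro A B h v hv
    have hmem : A.cluster v ∈ B.clusters := h ▸ ⟨v, rfl⟩
    obtain ⟨u, hu⟩ := hmem
    by_cases hur : u = B.root
    · subst hur
      refine ⟨B.toPPTree.rho, B.toPPTree.rho_ne_root, ?_⟩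
      rw [LeafTree.cluster_rho, ← hu, LeafTree.cluster_root]
    · exact ⟨u, hur, hu⟩
  let f : A.toPPTree.V → B.toPPTree.V := fun v =>
    if hv : v = A.root then B.root else (ex A B h v hv).choose
  let g : B.toPPTree.V → A.toPPTree.V := fun u =>
    if hu : u = B.root then A.root else (ex B A h.symm u hu).choose
  have hf : ∀ v (hv : v ≠ A.root), f v ≠ B.root ∧ B.cluster (f v) = A.cluster v := by
    intro v hv
    simp only [f, dif_neg hv]
    exact (ex A B h v hv).choose_spec
  have hg : ∀ u (hu : u ≠ B.root), g u ≠ A.root ∧ A.cluster (g u) = B.cluster u := by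
    intro u hu
    simp only [g, dif_neg hu]
    exact (ex B A h.symm u hu).choose_spec
  have hfr : f A.root = B.root := dif_pos rfl
  have hgr : g B.root = A.root := dif_pos rfl
  have hgf : ∀ v, g (f v) = v := by
    intro v
    by_cases hv : v = A.root
    · subst hv; rw [hfr, hgr]
    · obtain ⟨hfne, hfcl⟩ := hf v hv
      obtain ⟨hgne, hgcl⟩ := hg (f v) hfne
      exact LeafTree.cluster_inj hgne hv (hgcl.trans hfcl)
  have hfg : ∀ u, f (g u) = u := by
    intro u
    by_cases hu : u = B.root
    · subst hu; rw [hgr, hfr]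
    · obtain ⟨hgne, hgcl⟩ := hg u hu
      obtain ⟨hfne, hfcl⟩ := hf (g u) hgne
      exact LeafTree.cluster_inj hfne hu (hfcl.trans hgcl)
  refine ⟨⟨f, g, hgf, hfg⟩, ?_, hfr, ?_⟩
  · -- leaves
    intro x
    show f (A.emb x) = B.emb x
    obtain ⟨hfne, hfcl⟩ := hf (A.emb x) (LeafTree.emb_ne_root x)
    apply LeafTree.cluster_inj hfne (LeafTree.emb_ne_root x)
    rw [hfcl, LeafTree.cluster_emb, LeafTree.cluster_emb]
  · -- parent
    intro v
    show f (A.toPPTree.parent v) = B.toPPTree.parent (f v)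
    by_cases hv : v = A.root
    · subst hv
      rw [A.toPPTree.parent_root, hfr, B.toPPTree.parent_root]
    by_cases hpv : A.toPPTree.parent v = A.root
    · -- v = rho
      have hvrho : v = A.toPPTree.rho := PPTree.eq_rho hv hpv
      obtain ⟨hfne, hfcl⟩ := hf v hv
      have : f v = B.toPPTree.rho := by
        apply cluster_univ_unique hfne
        rw [hfcl, hvrho, LeafTree.cluster_rho]
      rw [hpv, hfr, this, PPTree.parent_rho]
    · obtain ⟨hfne, hfcl⟩ := hf v hv
      obtain ⟨hfpne, hfpcl⟩ := hf (A.toPPTree.parent v) hpv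
      have hBpne : B.toPPTree.parent (f v) ≠ B.root := by
        intro hB
        have : f v = B.toPPTree.rho := PPTree.eq_rho hfne hB
        have huniv : A.cluster v = Set.univ := by
          rw [← hfcl, this, LeafTree.cluster_rho]
        exact hpv (by rw [cluster_univ_unique hv huniv, PPTree.parent_rho])
      symm
      apply LeafTree.cluster_inj hBpne hfpne
      rw [hfpcl]
      obtain ⟨hAs, hAleast⟩ := cluster_parent_least hv hpv
      obtain ⟨hBs, hBleast⟩ := cluster_parent_least hfne hBpne
      apply Set.Subset.antisymm
      · apply hBleast (A.cluster (A.toPPTree.parent v)) (h ▸ ⟨_, rfl⟩)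
        rw [hfcl]
        exact hAs
      · apply hAleast (B.cluster (B.toPPTree.parent (f v))) (h.symm ▸ ⟨_, rfl⟩)
        rw [← hfcl]
        exact hBs

end CharIso
/-- Every best match graph `(G,σ)` has a least-resolved tree,
unique up to isomorphism fixing the leaves: a tree `T*` explaining `(G,σ)`
that is displayed by every tree explaining `(G,σ)`. -/
theorem bmg_least_resolved_tree
    {Y : Type} (G : V → V → Prop) (σ : V → Y)
    (hBMG : ∃ T : LeafTree V, Explains T σ G) :
    ∃ Tstar : LeafTree V, Explains Tstar σ G ∧
      (∀ T : LeafTree V, Explains T σ G → T.Displays Tstar) ∧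
      (∀ T₁ T₂ : LeafTree V,
        (Explains T₁ σ G ∧ ∀ T : LeafTree V, Explains T σ G → T.Displays T₁) →
        (Explains T₂ σ G ∧ ∀ T : LeafTree V, Explains T σ G → T.Displays T₂) →
        LeafIso T₁ T₂) := by
  classical
  obtain ⟨T₀, hT₀⟩ := hBMG
  set Hstar : Set (Set V) :=
    {C | ∀ T : LeafTree V, Explains T σ G → C ∈ T.clusters} with hHstar
  have hHier : IsHier Hstar := by
    refine ⟨fun T hT => LeafTree.univ_mem_clusters,
      fun x T hT => LeafTree.singleton_mem_clusters x, ?_, ?_⟩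
    · intro h
      exact Set.not_nonempty_empty (LeafTree.nonempty_of_mem_clusters (h T₀ hT₀))
    · intro C hC D hD
      exact LeafTree.laminar (hC T₀ hT₀) (hD T₀ hT₀)
  set Tstar : LeafTree V := treeOfHier hHier with hTstar
  have hclstar : Tstar.clusters = Hstar := treeOfHier_clusters hHier
  have hdisp : ∀ T : LeafTree V, Explains T σ G → T.Displays Tstar := by
    intro T hT C hC
    rw [hclstar] at hC
    exact hC T hT
  have hforb : ∀ a b c, Forbidden G σ a b c → ¬ DispT Tstar a b c := by
    intro a b c hf hd
    obtain ⟨C, hCc, haC, hbC, hcC⟩ := (dispT_iff_cluster Tstar a b c).1 hd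
    rw [hclstar] at hCc
    have hd0 : DispT T₀ a b c :=
      (dispT_iff_cluster T₀ a b c).2 ⟨C, hCc T₀ hT₀, haC, hbC, hcC⟩
    exact ((explains_iff hT₀ T₀).1 hT₀).2 a b c hf hd0
  have hinfo : ∀ a b c, Informative G σ a b c → DispT Tstar a b c := by
    intro a b c hinf
    rw [dispT_iff_cluster]
    -- choose a minimum-cardinality member of Hstar containing a and b
    have hFfin : {C : Set V | C ∈ Hstar ∧ a ∈ C ∧ b ∈ C}.Finite := Set.toFinite _
    have hFne : hFfin.toFinset.Nonempty := by
      rw [Set.Finite.toFinset_nonempty]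
      exact ⟨Set.univ, fun T hT => LeafTree.univ_mem_clusters, trivial, trivial⟩
    obtain ⟨Cm, hCm, hmin⟩ := hFfin.toFinset.exists_min_image
      (fun C => C.toFinset.card) hFne
    rw [Set.Finite.mem_toFinset] at hCm
    obtain ⟨hCmH, haCm, hbCm⟩ := hCm
    by_cases hcCm : c ∈ Cm
    · exfalso
      -- the component of a in the Aho graph on Cm is a smaller member of Hstar
      set K : Set V := {t | AhoConn G σ Cm a t} with hKdef
      have haK : a ∈ K := Relation.ReflTransGen.refl
      have hbK : b ∈ K :=
        Relation.ReflTransGen.single ⟨haCm, hbCm, Or.inl ⟨c, hcCm, hinf⟩⟩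
      have hKH : K ∈ Hstar := by
        intro T hT
        exact ahoComp_mem_clusters hT (hCmH T hT) haCm
      -- K is strictly smaller than Cm: work inside T₀
      obtain ⟨u₀, hu₀⟩ := hCmH T₀ hT₀
      have hCmne : (T₀.emb '' Cm).Nonempty := ⟨T₀.emb a, a, haCm, rfl⟩
      set c₀ : T₀.toPPTree.V := T₀.toPPTree.lcaSet (T₀.emb '' Cm) with hc₀
      obtain ⟨hc₀1, hc₀2⟩ := PPTree.lcaSet_spec hCmne
      have hc₀u₀ : T₀.toPPTree.le c₀ u₀ := by
        apply hc₀2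
        rintro l ⟨t, ht, rfl⟩
        have h2 : t ∈ T₀.cluster u₀ := by rw [hu₀]; exact ht
        exact h2
      have hclc₀ : T₀.cluster c₀ = Cm := by
        apply Set.Subset.antisymm
        · intro t ht
          rw [← hu₀]
          exact (PPTree.le_trans ht hc₀u₀ : T₀.toPPTree.le (T₀.emb t) u₀)
        · intro t ht
          exact hc₀1 _ ⟨t, ht, rfl⟩
      have hea : T₀.toPPTree.le (T₀.emb a) c₀ := hc₀1 _ ⟨a, haCm, rfl⟩
      have heane : T₀.emb a ≠ c₀ := by
        intro h
        have h2 : Cm = {a} := by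
          rw [← hclc₀, ← h, LeafTree.cluster_emb]
        exact hinf.1 (by
          have := h2 ▸ hbCm
          simpa using this.symm)
      have hc₀root : c₀ ≠ T₀.root := by
        intro h
        have hrho : T₀.toPPTree.le c₀ T₀.toPPTree.rho := by
          apply hc₀2
          rintro l ⟨t, ht, rfl⟩
          exact PPTree.le_rho (LeafTree.emb_ne_root t)
        rw [h] at hrho
        exact T₀.toPPTree.rho_ne_root (PPTree.root_le hrho)
      obtain ⟨c₁, hc₁p, hc₁ne, hac₁⟩ := PPTree.exists_child_le hea heane hc₀root
      -- every element of K lies below c₁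
      have hKc₁ : ∀ t ∈ K, T₀.toPPTree.le (T₀.emb t) c₁ := by
        intro t ht
        induction ht with
        | refl => exact hac₁
        | @tail x y hx he ih =>
          obtain ⟨hxCm, hyCm, horient⟩ := he
          have hr_lt : T₀.toPPTree.lt (lcaL T₀ x y) c₀ := by
            rcases horient with ⟨d, hdCm, hinf2⟩ | ⟨d, hdCm, hinf2⟩
            · have h1 := informative_lt hT₀ hinf2
              have h2 : T₀.toPPTree.le (lcaL T₀ x d) c₀ :=
                PPTree.lca_le _ _ (hc₀1 _ ⟨x, hxCm, rfl⟩) (hc₀1 _ ⟨d, hdCm, rfl⟩)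
              exact PPTree.lt_of_lt_of_le' h1 h2
            · have h1 := informative_lt hT₀ hinf2
              have h2 : T₀.toPPTree.le (lcaL T₀ y d) c₀ :=
                PPTree.lca_le _ _ (hc₀1 _ ⟨y, hyCm, rfl⟩) (hc₀1 _ ⟨d, hdCm, rfl⟩)
              have h3 := PPTree.lt_of_lt_of_le' h1 h2
              have h4 : lcaL T₀ x y = lcaL T₀ y x :=
                T₀.toPPTree.lca_comm (T₀.emb x) (T₀.emb y)
              rw [h4]
              exact h3
          have hxr : T₀.toPPTree.le (T₀.emb x) (lcaL T₀ x y) := PPTree.le_lca_left _ _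
          rcases PPTree.le_child_or_ge hc₁p ih hxr with h2 | h2
          · exact PPTree.le_trans (PPTree.le_lca_right _ _) h2
          · exact absurd (PPTree.le_antisymm h2 hr_lt.1).symm hr_lt.2
      -- hence K is strictly smaller than Cm
      have hKsub : K ⊆ T₀.cluster c₁ := fun t ht => hKc₁ t ht
      have hc₁lt : T₀.cluster c₁ ⊂ Cm := by
        rw [← hclc₀]
        exact LeafTree.cluster_ssubset (hc₁p ▸ PPTree.le_parent c₁) hc₁ne hc₀root
      have hKF : K ∈ hFfin.toFinset := by
        rw [Set.Finite.mem_toFinset]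
        exact ⟨hKH, haK, hbK⟩
      have hcard := hmin K hKF
      have hlt : K.toFinset.card < Cm.toFinset.card := by
        apply Finset.card_lt_card
        apply Finset.ssubset_of_subset_of_ssubset (Set.toFinset_subset_toFinset.mpr hKsub)
        rw [Set.toFinset_ssubset_toFinset]
        exact hc₁lt
      omega
    · exact ⟨Cm, hclstar ▸ hCmH, haCm, hbCm, hcCm⟩
  have hexp : Explains Tstar σ G := (explains_iff hT₀ Tstar).2 ⟨hinfo, hforb⟩
  refine ⟨Tstar, hexp, hdisp, ?_⟩
  rintro T₁ T₂ ⟨hE1, hD1⟩ ⟨hE2, hD2⟩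
  have hcl : T₁.clusters = T₂.clusters :=
    Set.Subset.antisymm (hD1 T₂ hE2) (hD2 T₁ hE1)
  exact leafIso_of_clusters_eq hcl

end LeastResolved
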